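/- Let A = diag(a₁,…,aₙ) be a positive definite diagonal matrix and ε ≠ 0. Under the map x = A^{1/2}γ / √((Aγ,γ)) from the unit sphere {(γ,γ)=1} to the unit sphere {(x,x)=1}, the metric g*(X,Y) = (Aγ,γ)^{1/ε − 2}((AX,Y)(Aγ,γ) − (Aγ,X)(Aγ,Y)) on tangent vectors X,Y ∈ T_γ S^{n-1} is transformed into the metric g(X,Y) = (A⁻¹x,x)^{−1/ε}(X,Y) on T_x S^{n-1}, which is conformally equivalent to the round metric. -/

import Mathlib

open scoped BigOperators
open Real

/-- The map `γ ↦ x = A^{1/2}γ/√((Aγ,γ))` for `A = diag(a₁,…,aₙ)`. -/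
noncomputable def sphereMap {n : ℕ} (a : Fin n → ℝ) (γ : Fin n → ℝ) : Fin n → ℝ :=
  fun i => Real.sqrt (a i) * γ i / Real.sqrt (∑ j, a j * γ j ^ 2)

lemma comp_diff {n : ℕ} (a : Fin n → ℝ) (γ : Fin n → ℝ)
    (hQ : 0 < ∑ j, a j * γ j ^ 2) (i : Fin n) :
    DifferentiableAt ℝ (fun v => Real.sqrt (a i) * v i / Real.sqrt (∑ j, a j * v j ^ 2)) γ := by
  have hq : DifferentiableAt ℝ (fun v : Fin n → ℝ => ∑ j, a j * v j ^ 2) γ := by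
    fun_prop
  have hs : DifferentiableAt ℝ (fun v : Fin n → ℝ => Real.sqrt (∑ j, a j * v j ^ 2)) γ :=
    hq.sqrt hQ.ne'
  have hn : DifferentiableAt ℝ (fun v : Fin n → ℝ => Real.sqrt (a i) * v i) γ := by fun_prop
  simp only [div_eq_mul_inv]
  exact hn.mul (hs.inv (Real.sqrt_ne_zero'.mpr hQ))

lemma line_deriv {n : ℕ} (a : Fin n → ℝ) (γ Z : Fin n → ℝ)
    (hQ : 0 < ∑ j, a j * γ j ^ 2) (i : Fin n) :
    HasDerivAt (fun t : ℝ => Real.sqrt (a i) * (γ i + t * Z i)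
        / Real.sqrt (∑ j, a j * (γ j + t * Z j) ^ 2))
      (Real.sqrt (a i) * (Z i * (∑ j, a j * γ j ^ 2) - γ i * (∑ j, a j * γ j * Z j))
          / (Real.sqrt (∑ j, a j * γ j ^ 2) * (∑ j, a j * γ j ^ 2))) 0 := by
  set Q := ∑ j, a j * γ j ^ 2 with hQdef
  have hq : HasDerivAt (fun t : ℝ => ∑ j, a j * (γ j + t * Z j) ^ 2)
      (∑ j, 2 * (a j * γ j * Z j)) 0 := by
    have : ∀ j ∈ Finset.univ, HasDerivAt (fun t : ℝ => a j * (γ j + t * Z j) ^ 2)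
        (2 * (a j * γ j * Z j)) 0 := by
      intro j _
      have h1 : HasDerivAt (fun t : ℝ => γ j + t * Z j) (Z j) 0 := by
        simpa using ((hasDerivAt_id (0:ℝ)).mul_const (Z j)).const_add (γ j)
      have := ((h1.pow 2).const_mul (a j))
      refine this.congr_deriv ?_
      simp; ring
    simpa using HasDerivAt.fun_sum this
  have hqval : (∑ j, a j * (γ j + (0:ℝ) * Z j) ^ 2) = Q := by simp [hQdef]
  have hsq : HasDerivAt (fun t : ℝ => Real.sqrt (∑ j, a j * (γ j + t * Z j) ^ 2))
      ((∑ j, 2 * (a j * γ j * Z j)) / (2 * Real.sqrt Q)) 0 := by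
    have := hq.sqrt (by rw [hqval]; exact hQ.ne')
    simpa [hqval] using this
  have hnum : HasDerivAt (fun t : ℝ => Real.sqrt (a i) * (γ i + t * Z i))
      (Real.sqrt (a i) * Z i) 0 := by
    have h1 : HasDerivAt (fun t : ℝ => γ i + t * Z i) (Z i) 0 := by
      simpa using ((hasDerivAt_id (0:ℝ)).mul_const (Z i)).const_add (γ i)
    exact h1.const_mul _
  have hd := hnum.div hsq (by rw [hqval]; exact (Real.sqrt_ne_zero'.mpr hQ))
  refine hd.congr_deriv (Eq.symm ?_)
  rw [hqval]
  have hs : Real.sqrt Q ≠ 0 := Real.sqrt_ne_zero'.mpr hQ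
  have hs2 : Real.sqrt Q ^ 2 = Q := Real.sq_sqrt hQ.le
  have hsum : (∑ j, 2 * (a j * γ j * Z j)) = 2 * ∑ j, a j * γ j * Z j := by
    rw [Finset.mul_sum]
  rw [hsum]
  field_simp
  linear_combination (-(Real.sqrt (a i) * γ i * ∑ j, a j * γ j * Z j)) * hs2

lemma sphereMap_fderiv {n : ℕ} (a : Fin n → ℝ) (γ Z : Fin n → ℝ)
    (hQ : 0 < ∑ j, a j * γ j ^ 2) (i : Fin n) :
    (fderiv ℝ (sphereMap a) γ Z) i
      = Real.sqrt (a i) * (Z i * (∑ j, a j * γ j ^ 2) - γ i * (∑ j, a j * γ j * Z j))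
          / (Real.sqrt (∑ j, a j * γ j ^ 2) * (∑ j, a j * γ j ^ 2)) := by
  have hdiff : ∀ i, DifferentiableAt ℝ (fun v => sphereMap a v i) γ := fun i =>
    comp_diff a γ hQ i
  have hpi : fderiv ℝ (sphereMap a) γ
      = ContinuousLinearMap.pi fun i => fderiv ℝ (fun v => sphereMap a v i) γ :=
    fderiv_pi (𝕜 := ℝ) (φ := fun i v => sphereMap a v i) (x := γ) hdiff
  rw [hpi, ContinuousLinearMap.pi_apply]
  have hline : HasDerivAt (fun t : ℝ => γ + t • Z) Z 0 := by
    simpa using ((hasDerivAt_id (0:ℝ)).smul_const Z).const_add γ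
  have h1 : HasDerivAt (fun t : ℝ => sphereMap a (γ + t • Z) i)
      (fderiv ℝ (fun v => sphereMap a v i) γ Z) 0 := by
    have hd' : HasFDerivAt (fun v => sphereMap a v i)
        (fderiv ℝ (fun v => sphereMap a v i) γ) (γ + (0:ℝ) • Z) := by
      simpa using (hdiff i).hasFDerivAt
    exact hd'.comp_hasDerivAt 0 hline
  have h2 := line_deriv a γ Z hQ i
  have heq : (fun t : ℝ => sphereMap a (γ + t • Z) i)
      = fun t : ℝ => Real.sqrt (a i) * (γ i + t * Z i)
          / Real.sqrt (∑ j, a j * (γ j + t * Z j) ^ 2) := by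
    funext t
    simp [sphereMap, smul_eq_mul]
  rw [heq] at h1
  exact h1.unique h2

/-- under `x = A^{1/2}γ/√((Aγ,γ))` the metric
`g*(X,Y) = (Aγ,γ)^{1/ε−2}((AX,Y)(Aγ,γ) − (Aγ,X)(Aγ,Y))` on `T_γS^{n-1}` transforms to the
conformally flat metric `g(X,Y) = (A⁻¹x,x)^{−1/ε}(X,Y)` on `T_xS^{n-1}`. -/
theorem metric_transforms_to_conformal {n : ℕ} (a : Fin n → ℝ) (ε : ℝ)
    (ha : ∀ i, 0 < a i) (hε : ε ≠ 0)
    (γ X Y : Fin n → ℝ)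
    (hγ : ∑ i, γ i ^ 2 = 1)
    (hX : ∑ i, γ i * X i = 0) (hY : ∑ i, γ i * Y i = 0) :
    (∑ i, a i * γ i ^ 2) ^ (1 / ε - 2 : ℝ) *
        ((∑ i, a i * X i * Y i) * (∑ i, a i * γ i ^ 2)
          - (∑ i, a i * γ i * X i) * (∑ i, a i * γ i * Y i))
      = (∑ i, (a i)⁻¹ * (sphereMap a γ i) ^ 2) ^ (-(1 / ε) : ℝ) *
          ∑ i, (fderiv ℝ (sphereMap a) γ X) i * (fderiv ℝ (sphereMap a) γ Y) i := by
  set Q := ∑ i, a i * γ i ^ 2 with hQdef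
  have hQpos : 0 < Q := by
    obtain ⟨i, hi⟩ : ∃ i, γ i ≠ 0 := by
      by_contra h
      push_neg at h
      simp [h] at hγ
    exact Finset.sum_pos' (fun j _ => mul_nonneg (ha j).le (sq_nonneg _))
      ⟨i, Finset.mem_univ i, mul_pos (ha i) (by positivity)⟩
  have hQ0 : Q ≠ 0 := hQpos.ne'
  have hs2 : Real.sqrt Q * Real.sqrt Q = Q := Real.mul_self_sqrt hQpos.le
  -- conformal factor
  have hconf : ∑ i, (a i)⁻¹ * (sphereMap a γ i) ^ 2 = Q⁻¹ := by
    have h1 : ∀ i, (a i)⁻¹ * (sphereMap a γ i) ^ 2 = γ i ^ 2 * Q⁻¹ := by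
      intro i
      have ha2 : Real.sqrt (a i) * Real.sqrt (a i) = a i := Real.mul_self_sqrt (ha i).le
      have : (sphereMap a γ i) ^ 2
          = (Real.sqrt (a i) * Real.sqrt (a i)) * γ i ^ 2 / (Real.sqrt Q * Real.sqrt Q) := by
        simp only [sphereMap, ← hQdef]
        ring
      rw [this, ha2, hs2]
      field_simp [(ha i).ne']
    rw [Finset.sum_congr rfl fun i _ => h1 i, ← Finset.sum_mul, hγ, one_mul]
  -- the sum of products of differentials
  set SX := ∑ i, a i * γ i * X i with hSX
  set SY := ∑ i, a i * γ i * Y i with hSY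
  have hsum : (∑ i, (fderiv ℝ (sphereMap a) γ X) i * (fderiv ℝ (sphereMap a) γ Y) i)
      = (Q * Q * (∑ i, a i * X i * Y i) - Q * (SX * SY)) / (Q * (Q * Q)) := by
    have h1 : ∀ i, (fderiv ℝ (sphereMap a) γ X) i * (fderiv ℝ (sphereMap a) γ Y) i
        = a i * ((X i * Q - γ i * SX) * (Y i * Q - γ i * SY)) / (Q * (Q * Q)) := by
      intro i
      rw [sphereMap_fderiv a γ X hQpos i, sphereMap_fderiv a γ Y hQpos i]
      have ha2 : Real.sqrt (a i) * Real.sqrt (a i) = a i := Real.mul_self_sqrt (ha i).le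
      rw [← hQdef, ← hSX, ← hSY]
      rw [show Real.sqrt (a i) * (X i * Q - γ i * SX) / (Real.sqrt Q * Q)
            * (Real.sqrt (a i) * (Y i * Q - γ i * SY) / (Real.sqrt Q * Q))
          = (Real.sqrt (a i) * Real.sqrt (a i))
              * ((X i * Q - γ i * SX) * (Y i * Q - γ i * SY))
              / ((Real.sqrt Q * Real.sqrt Q) * (Q * Q)) from by ring]
      rw [ha2, hs2]
    rw [Finset.sum_congr rfl fun i _ => h1 i, ← Finset.sum_div]
    congr 1
    have h2 : ∀ i, a i * ((X i * Q - γ i * SX) * (Y i * Q - γ i * SY))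
        = Q * Q * (a i * X i * Y i) - (Q * SY) * (a i * γ i * X i)
          - (Q * SX) * (a i * γ i * Y i) + (SX * SY) * (a i * γ i ^ 2) := by
      intro i; ring
    rw [Finset.sum_congr rfl fun i _ => h2 i]
    simp only [Finset.sum_add_distrib, Finset.sum_sub_distrib, ← Finset.mul_sum,
      ← hQdef, ← hSX, ← hSY]
    ring
  rw [hconf, hsum]
  have hrpow : (Q⁻¹) ^ (-(1 / ε) : ℝ) = Q ^ (1 / ε : ℝ) := by
    rw [Real.inv_rpow hQpos.le, ← Real.rpow_neg hQpos.le, neg_neg]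
  have hrpow2 : Q ^ (1 / ε - 2 : ℝ) = Q ^ (1 / ε : ℝ) / Q ^ 2 := by
    rw [Real.rpow_sub hQpos, Real.rpow_two]
  rw [hrpow, hrpow2]
  field_simp
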